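/- The product aggregation function agg_Π(A,S) = ∏_{x∈A}(1−x) − ∏_{x∈S}(1−x), defined for multisets A, S of values in [0,1], satisfies Neutrality (agg_Π(A,S) = agg_Π(Core(A), Core(S))), Balance (A ≅ S implies agg_Π(A,S) = 0, and agg_Π is invariant under replacing arguments by balanced multisets), and Monotonicity (agg_Π(A,S) ≤ 0 if A ⪰ S; agg_Π(A,S) ≥ 0 if S ⪰ A; agg_Π(A,S) ≤ agg_Π(A',S) if A ⪰ A'; agg_Π(A,S) ≥ agg_Π(A,S') if S ⪰ S'). -/
import Mathlib


open Set

structure QBAF (A : Type*) [DecidableEq A] where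
  att : Finset (A × A)
  sup : Finset (A × A)
  disj : Disjoint att sup
  tau : A → ℝ
  w : A × A → ℝ

namespace QBAF

variable {A : Type*} [DecidableEq A]

/-- The set of all edges (attacks and supports). -/
def edges (Q : QBAF A) : Finset (A × A) := Q.att ∪ Q.sup

/-- Multiset of edge-weighted attacker strengths of `α`. -/
def attMS (Q : QBAF A) (σ : A → ℝ) (α : A) : Multiset ℝ :=
  (Q.att.filter (fun r => r.2 = α)).val.map (fun r => σ r.1 * Q.w r)

/-- Multiset of edge-weighted supporter strengths of `α`. -/
def supMS (Q : QBAF A) (σ : A → ℝ) (α : A) : Multiset ℝ :=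
  (Q.sup.filter (fun r => r.2 = α)).val.map (fun r => σ r.1 * Q.w r)

/-- Iterates of the modular-semantics update procedure:
`σ⁰ = τ`, `σ^(i+1)(α) = infl (τ α) (agg A^σ_α S^σ_α)`. -/
def iter (agg : Multiset ℝ → Multiset ℝ → ℝ) (infl : ℝ → ℝ → ℝ)
    (Q : QBAF A) : ℕ → A → ℝ
  | 0 => Q.tau
  | i + 1 => fun α =>
      infl (Q.tau α)
        (agg (Q.attMS (iter agg infl Q i) α) (Q.supMS (iter agg infl Q i) α))

/-- Replace the edge weight function. -/
def setW (Q : QBAF A) (w' : A × A → ℝ) : QBAF A := { Q with w := w' }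

/-- Replace the base score function. -/
def setTau (Q : QBAF A) (τ' : A → ℝ) : QBAF A := { Q with tau := τ' }

/-- For acyclic EW-QBAFs the iteration stabilizes after `card A` steps, so this is
the strength obtained by a forward pass in topological order. -/
def strength [Fintype A] (agg : Multiset ℝ → Multiset ℝ → ℝ) (infl : ℝ → ℝ → ℝ)
    (Q : QBAF A) : A → ℝ := iter agg infl Q (Fintype.card A)

end QBAF

/-- `Core` of a multiset of reals: the sub-multiset of nonzero elements. -/
noncomputable def mcore (S : Multiset ℝ) : Multiset ℝ := S.filter (fun x => x ≠ 0)

/-- There is a (nonempty) directed path from `a` to `b` using edges of `R`. -/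
def HasPath {A : Type*} (R : Finset (A × A)) (a b : A) : Prop :=
  Relation.TransGen (fun x y => (x, y) ∈ R) a b

/-- `p` is a directed path from `a` to `b`: a nonempty list of consecutive edges of `R`. -/
def IsPath {A : Type*} (R : Finset (A × A)) (a b : A) (p : List (A × A)) : Prop :=
  p ≠ [] ∧ (∀ e ∈ p, e ∈ R) ∧ List.Chain' (fun e f => e.2 = f.1) p ∧
    p.head?.map Prod.fst = some a ∧ p.getLast?.map Prod.snd = some b

/-- The EW-QBAF is acyclic. -/
def QAcyclic {A : Type*} [DecidableEq A] (Q : QBAF A) : Prop :=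
  ∀ α, ¬ HasPath Q.edges α α

/-- A gradual semantics assigning strengths to arguments of any EW-QBAF. -/
abbrev Sem (A : Type*) [DecidableEq A] := QBAF A → A → ℝ

/-- `S` dominates `T`: either both cores are empty, or there is a sub-multiset of
`Core S` in bijection `f` with `Core T` such that `x ≤ f x` (the bijection encoded
as a multiset of pairs). -/
def MDominates (S T : Multiset ℝ) : Prop :=
  (mcore S = 0 ∧ mcore T = 0) ∨
    ∃ P : Multiset (ℝ × ℝ), P.map Prod.fst = mcore T ∧ P.map Prod.snd ≤ mcore S ∧
      ∀ q ∈ P, q.1 ≤ q.2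

/-- Monotonicity of an aggregation function. -/
def AggMonotone (agg : Multiset ℝ → Multiset ℝ → ℝ) : Prop :=
  (∀ A S, MDominates A S → agg A S ≤ 0) ∧
  (∀ A S, MDominates S A → 0 ≤ agg A S) ∧
  (∀ A A' S, MDominates A A' → agg A S ≤ agg A' S) ∧
  (∀ A S S', MDominates S S' → agg A S' ≤ agg A S)

/-- Monotonicity of an influence function. -/
def InflMonotone (infl : ℝ → ℝ → ℝ) : Prop :=
  (∀ b a, a < 0 → infl b a ≤ b) ∧
  (∀ b a, 0 < a → b ≤ infl b a) ∧
  (∀ a b₁ b₂, b₁ ≤ b₂ → infl b₁ a ≤ infl b₂ a) ∧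
  (∀ b a₁ a₂, a₁ ≤ a₂ → infl b a₁ ≤ infl b a₂)

/-- Edge-monotonicity of a semantics: increasing the weight of a single attack
(support) edge does not increase (decrease) the strength of its target. -/
def EdgeMono {A : Type*} [DecidableEq A] (σ : Sem A) : Prop :=
  ∀ (Q : QBAF A) (r : A × A) (w' : A × A → ℝ),
    r ∈ Q.edges → Q.w r ≤ w' r → (∀ t, t ≠ r → w' t = Q.w t) →
    (r ∈ Q.att → σ (Q.setW w') r.2 ≤ σ Q r.2) ∧
    (r ∈ Q.sup → σ Q r.2 ≤ σ (Q.setW w') r.2)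

/-- (Base-score) monotonicity of a semantics: if `(β,α)` is an edge and the unique
path from `β` to `α`, then increasing `τ(β)` changes `σ(α)` sign-correctly. -/
def BaseMono {A : Type*} [DecidableEq A] (σ : Sem A) : Prop :=
  ∀ (Q : QBAF A) (β α : A) (τ' : A → ℝ),
    β ≠ α → (β, α) ∈ Q.edges → (∃! p, IsPath Q.edges β α p) →
    Q.tau β ≤ τ' β → (∀ γ, γ ≠ β → τ' γ = Q.tau γ) →
    ((β, α) ∈ Q.att → σ (Q.setTau τ') α ≤ σ Q α) ∧
    ((β, α) ∈ Q.sup → σ Q α ≤ σ (Q.setTau τ') α)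

/-- Edge-neutrality of a semantics: adding a fresh edge of weight `0` leaves the
strength of its target unchanged. -/
def EdgeNeutralSem {A : Type*} [DecidableEq A] (σ : Sem A) : Prop :=
  ∀ (Q Q' : QBAF A) (β α : A),
    Q'.tau = Q.tau → Q.att ⊆ Q'.att → Q.sup ⊆ Q'.sup →
    Q'.edges = insert (β, α) Q.edges →
    (∀ r ∈ Q.edges, Q'.w r = Q.w r) → Q'.w (β, α) = 0 →
    σ Q' α = σ Q α

/-- Edge-stability of a semantics: if all incoming edges of `α` have weight `0`,
the strength of `α` is its base score. -/
def EdgeStable {A : Type*} [DecidableEq A] (σ : Sem A) : Prop :=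
  ∀ (Q : QBAF A) (α : A), (∀ r ∈ Q.edges, r.2 = α → Q.w r = 0) → σ Q α = Q.tau α

/-- `s` is attainable for `α` by varying edge weights in `[0,1]`. -/
def Attainable {A : Type*} [DecidableEq A] (σ : Sem A) (Q : QBAF A) (α : A) (s : ℝ) : Prop :=
  ∃ w' : A × A → ℝ, (∀ r, w' r ∈ Set.Icc (0 : ℝ) 1) ∧ σ (Q.setW w') α = s

/-- The gradient-based relation attribution explanation `∇_{r→α}^σ`: the derivative
of the strength of `α` with respect to the weight of edge `r`. -/
noncomputable def grae {A : Type*} [DecidableEq A] (σ : Sem A) (Q : QBAF A)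
    (r : A × A) (α : A) : ℝ :=
  deriv (fun δ => σ (Q.setW (Function.update Q.w r δ)) α) (Q.w r)

/-- Product aggregation `agg_Π(A,S) = ∏_{x∈A}(1−x) − ∏_{x∈S}(1−x)`. -/
noncomputable def aggProd (Aset S : Multiset ℝ) : ℝ :=
  (Aset.map (fun x => 1 - x)).prod - (S.map (fun x => 1 - x)).prod

/-- All elements of the multiset lie in `[0,1]`. -/
def InUnit (S : Multiset ℝ) : Prop := ∀ x ∈ S, x ∈ Set.Icc (0 : ℝ) 1

lemma mcore_prod (S : Multiset ℝ) :
    ((mcore S).map (fun x => 1 - x)).prod = (S.map (fun x => 1 - x)).prod := by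
  classical
  conv_rhs => rw [← Multiset.filter_add_not (fun x => x ≠ 0) S]
  rw [Multiset.map_add, Multiset.prod_add, mcore]
  have h1 : ((S.filter (fun x => ¬ x ≠ 0)).map (fun x => 1 - x)).prod = 1 := by
    apply Multiset.prod_eq_one
    intro x hx
    rcases Multiset.mem_map.1 hx with ⟨a, ha, rfl⟩
    have := (Multiset.mem_filter.1 ha).2
    simp at this
    simp [this]
  rw [h1, mul_one]

lemma prod_bounds (S : Multiset ℝ) (hS : InUnit S) :
    0 ≤ (S.map (fun x => 1 - x)).prod ∧ (S.map (fun x => 1 - x)).prod ≤ 1 := by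
  induction S using Multiset.induction_on with
  | empty => simp
  | cons a s ih =>
    have ha := hS a (Multiset.mem_cons_self a s)
    have hs : InUnit s := fun x hx => hS x (Multiset.mem_cons_of_mem hx)
    obtain ⟨h0, h1⟩ := ih hs
    have ha0 : 0 ≤ 1 - a := by linarith [ha.2]
    have ha1 : 1 - a ≤ 1 := by linarith [ha.1]
    rw [Multiset.map_cons, Multiset.prod_cons]
    constructor
    · exact mul_nonneg ha0 h0
    · calc (1 - a) * (s.map (fun x => 1 - x)).prod ≤ 1 * 1 :=
            mul_le_mul ha1 h1 h0 zero_le_one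
        _ = 1 := one_mul 1

lemma InUnit_mcore {S : Multiset ℝ} (hS : InUnit S) : InUnit (mcore S) :=
  fun x hx => hS x (Multiset.mem_of_le (Multiset.filter_le _ S) hx)

lemma prod_le_of_le {T S : Multiset ℝ} (h : T ≤ S) (hS : InUnit S) :
    (S.map (fun x => 1 - x)).prod ≤ (T.map (fun x => 1 - x)).prod := by
  obtain ⟨u, rfl⟩ := Multiset.le_iff_exists_add.1 h
  have hT : InUnit T := fun x hx => hS x (Multiset.mem_add.2 (Or.inl hx))
  have hu : InUnit u := fun x hx => hS x (Multiset.mem_add.2 (Or.inr hx))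
  rw [Multiset.map_add, Multiset.prod_add]
  calc (T.map (fun x => 1 - x)).prod * (u.map (fun x => 1 - x)).prod
      ≤ (T.map (fun x => 1 - x)).prod * 1 :=
        mul_le_mul_of_nonneg_left (prod_bounds u hu).2 (prod_bounds T hT).1
    _ = _ := mul_one _

lemma prod_pair (P : Multiset (ℝ × ℝ)) (hle : ∀ q ∈ P, q.1 ≤ q.2)
    (h2 : ∀ q ∈ P, q.2 ≤ 1) :
    (P.map (fun q => 1 - q.2)).prod ≤ (P.map (fun q => 1 - q.1)).prod := by
  induction P using Multiset.induction_on with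
  | empty => simp
  | cons a s ih =>
    have ha := hle a (Multiset.mem_cons_self a s)
    have ha2 := h2 a (Multiset.mem_cons_self a s)
    have hles : ∀ q ∈ s, q.1 ≤ q.2 := fun q hq => hle q (Multiset.mem_cons_of_mem hq)
    have h2s : ∀ q ∈ s, q.2 ≤ 1 := fun q hq => h2 q (Multiset.mem_cons_of_mem hq)
    have hsnn : 0 ≤ (s.map (fun q => 1 - q.2)).prod := by
      apply Multiset.prod_nonneg
      intro x hx
      rcases Multiset.mem_map.1 hx with ⟨q, hq, rfl⟩
      linarith [h2s q hq]
    simp only [Multiset.map_cons, Multiset.prod_cons]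
    exact mul_le_mul (by linarith) (ih hles h2s) hsnn (by linarith [ha, ha2])

/-- Main comparison: if `S` dominates `T` then the product over `S` is smaller. -/
lemma prod_le_of_dom {S T : Multiset ℝ} (hS : InUnit S) (hT : InUnit T)
    (h : MDominates S T) :
    (S.map (fun x => 1 - x)).prod ≤ (T.map (fun x => 1 - x)).prod := by
  rw [← mcore_prod S, ← mcore_prod T]
  rcases h with ⟨hS0, hT0⟩ | ⟨P, hfst, hsnd, hle⟩
  · rw [hS0, hT0]
  · have hmS := InUnit_mcore hS
    have step1 : ((mcore S).map (fun x => 1 - x)).prod ≤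
        ((P.map Prod.snd).map (fun x => 1 - x)).prod :=
      prod_le_of_le hsnd hmS
    have h2 : ∀ q ∈ P, q.2 ≤ 1 := by
      intro q hq
      have : q.2 ∈ mcore S := Multiset.mem_of_le hsnd
        (Multiset.mem_map.2 ⟨q, hq, rfl⟩)
      exact (hmS _ this).2
    have step2 : (P.map (fun q => 1 - q.2)).prod ≤ (P.map (fun q => 1 - q.1)).prod :=
      prod_pair P hle h2
    rw [← hfst]
    simp only [Multiset.map_map, Function.comp] at step1 step2 ⊢
    linarith

/-- **Properties of product aggregation** on multisets of values in `[0,1]`: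
Neutrality, Balance (both clauses), and Monotonicity (all four clauses). -/
theorem aggProd_properties :
    (∀ Aset S, InUnit Aset → InUnit S →
      aggProd Aset S = aggProd (mcore Aset) (mcore S)) ∧
    (∀ Aset S, InUnit Aset → InUnit S →
      mcore Aset = mcore S → aggProd Aset S = 0) ∧
    (∀ Aset Aset' S S', InUnit Aset → InUnit Aset' → InUnit S → InUnit S' →
      mcore Aset = mcore Aset' → mcore S = mcore S' →
      aggProd Aset S = aggProd Aset' S') ∧
    (∀ Aset S, InUnit Aset → InUnit S →
      MDominates Aset S → aggProd Aset S ≤ 0) ∧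
    (∀ Aset S, InUnit Aset → InUnit S →
      MDominates S Aset → 0 ≤ aggProd Aset S) ∧
    (∀ Aset Aset' S, InUnit Aset → InUnit Aset' → InUnit S →
      MDominates Aset Aset' → aggProd Aset S ≤ aggProd Aset' S) ∧
    (∀ Aset S S', InUnit Aset → InUnit S → InUnit S' →
      MDominates S S' → aggProd Aset S' ≤ aggProd Aset S) := by
  refine ⟨?_, ?_, ?_, ?_, ?_, ?_, ?_⟩
  · intro Aset S _ _
    simp [aggProd, mcore_prod]
  · intro Aset S _ _ h
    simp [aggProd, ← mcore_prod Aset, ← mcore_prod S, h]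
  · intro Aset Aset' S S' _ _ _ _ hA hS
    simp [aggProd, ← mcore_prod Aset, ← mcore_prod S, ← mcore_prod Aset',
      ← mcore_prod S', hA, hS]
  · intro Aset S hA hS h
    have := prod_le_of_dom hA hS h
    simp only [aggProd]; linarith
  · intro Aset S hA hS h
    have := prod_le_of_dom hS hA h
    simp only [aggProd]; linarith
  · intro Aset Aset' S hA hA' _ h
    have := prod_le_of_dom hA hA' h
    simp only [aggProd]; linarith
  · intro Aset S S' _ hS hS' h
    have := prod_le_of_dom hS hS' h
    simp only [aggProd]; linarith
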